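/- The quotient group of the free group on generators x, y, z, w by the normal closure of the relators (y z⁻¹)(x w⁻¹)⁻¹, (y w⁻¹)(z x⁻¹)⁻¹, (z w⁻¹)(x y⁻¹)⁻¹, and w is isomorphic to the quaternion group Q₈. -/
import Mathlib


/-- Relators of the presentation of the fundamental group of the hypercubical manifold:
generators `0, 1, 2, 3` are `x, y, z, w`, relators are `(y z⁻¹)(x w⁻¹)⁻¹`, `(y w⁻¹)(z x⁻¹)⁻¹`,
`(z w⁻¹)(x y⁻¹)⁻¹` and `w`. -/
def hmRels : Set (FreeGroup (Fin 4)) :=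
  { (FreeGroup.of 1 * (FreeGroup.of 2)⁻¹) * (FreeGroup.of 0 * (FreeGroup.of 3)⁻¹)⁻¹,
    (FreeGroup.of 1 * (FreeGroup.of 3)⁻¹) * (FreeGroup.of 2 * (FreeGroup.of 0)⁻¹)⁻¹,
    (FreeGroup.of 2 * (FreeGroup.of 3)⁻¹) * (FreeGroup.of 0 * (FreeGroup.of 1)⁻¹)⁻¹,
    FreeGroup.of 3 }

namespace HMAux

open QuaternionGroup

abbrev P := PresentedGroup hmRels

def X : P := PresentedGroup.of 0
def Y : P := PresentedGroup.of 1
def Z : P := PresentedGroup.of 2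
def W : P := PresentedGroup.of 3

lemma rel_one : ∀ r ∈ hmRels, PresentedGroup.mk hmRels r = 1 := fun r hr =>
  (QuotientGroup.eq_one_iff r).mpr (Subgroup.subset_normalClosure hr)

lemma h1 : (Y * Z⁻¹) * (X * W⁻¹)⁻¹ = 1 := by
  have := rel_one _ (by simp [hmRels] :
    (FreeGroup.of 1 * (FreeGroup.of 2)⁻¹) * (FreeGroup.of 0 * (FreeGroup.of 3)⁻¹)⁻¹ ∈ hmRels)
  simpa [X, Y, Z, W, PresentedGroup.of] using this

lemma h2 : (Y * W⁻¹) * (Z * X⁻¹)⁻¹ = 1 := by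
  have := rel_one _ (by simp [hmRels] :
    (FreeGroup.of 1 * (FreeGroup.of 3)⁻¹) * (FreeGroup.of 2 * (FreeGroup.of 0)⁻¹)⁻¹ ∈ hmRels)
  simpa [X, Y, Z, W, PresentedGroup.of] using this

lemma h3 : (Z * W⁻¹) * (X * Y⁻¹)⁻¹ = 1 := by
  have := rel_one _ (by simp [hmRels] :
    (FreeGroup.of 2 * (FreeGroup.of 3)⁻¹) * (FreeGroup.of 0 * (FreeGroup.of 1)⁻¹)⁻¹ ∈ hmRels)
  simpa [X, Y, Z, W, PresentedGroup.of] using this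

lemma h4 : W = 1 := rel_one _ (by simp [hmRels])

lemma hZ : Z = X * Y⁻¹ := by
  have h := h3; rw [h4, inv_one, mul_one] at h
  exact mul_inv_eq_one.mp h

lemma hY : Y = Z * X⁻¹ := by
  have h := h2; rw [h4, inv_one, mul_one] at h
  exact mul_inv_eq_one.mp h

lemma hYZ : Y * Z⁻¹ = X := by
  have h := h1; rw [h4, inv_one, mul_one] at h
  exact mul_inv_eq_one.mp h

lemma hYc : Y = X * Y⁻¹ * X⁻¹ := by
  conv_lhs => rw [hY, hZ]

lemma hYY : Y * Y = X * X := by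
  have h : Y * Y * X⁻¹ = X := by
    rw [show Y * Y * X⁻¹ = Y * (X * Y⁻¹)⁻¹ by group, ← hZ]; exact hYZ
  exact mul_inv_eq_iff_eq_mul.mp h

lemma hXXinv : X * X = (X * X)⁻¹ := by
  calc X * X = Y * Y := hYY.symm
    _ = (X * Y⁻¹ * X⁻¹) * (X * Y⁻¹ * X⁻¹) := by rw [← hYc]
    _ = X * (Y * Y)⁻¹ * X⁻¹ := by group
    _ = X * (X * X)⁻¹ * X⁻¹ := by rw [hYY]
    _ = (X * X)⁻¹ := by group

lemma hX4' : X * X * X * X = 1 := by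
  rw [mul_assoc]
  nth_rewrite 2 [hXXinv]
  group

lemma hX4 : X ^ 4 = 1 := by
  show X ^ (2 * 2) = 1
  rw [pow_mul, pow_two, pow_two, ← mul_assoc]
  exact hX4'

lemma hXinv : X⁻¹ = X ^ 3 := by
  apply inv_eq_of_mul_eq_one_left
  rw [← pow_succ]
  exact hX4

lemma hswap : X * Y = Y * X⁻¹ := by
  calc X * Y = X * Y⁻¹ * (Y * Y) := by rw [mul_assoc, inv_mul_cancel_left]
    _ = X * Y⁻¹ * (X * X) := by rw [hYY]
    _ = X * Y⁻¹ * (X * X)⁻¹ := by nth_rewrite 1 [hXXinv]; rfl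
    _ = (X * Y⁻¹ * X⁻¹) * X⁻¹ := by rw [mul_inv_rev, ← mul_assoc]
    _ = Y * X⁻¹ := by rw [← hYc]

lemma hpow (m : ℕ) : X ^ m = X ^ (m % 4) := pow_eq_pow_mod m hX4

lemma hcomm (m : ℕ) : X ^ m * Y = Y * X ^ (3 * m) := by
  induction m with
  | zero => simp
  | succ k ih =>
    calc X ^ (k + 1) * Y = X ^ k * (X * Y) := by rw [pow_succ, mul_assoc]
      _ = X ^ k * (Y * X⁻¹) := by rw [hswap]
      _ = X ^ k * Y * X⁻¹ := by rw [mul_assoc]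
      _ = Y * X ^ (3 * k) * X⁻¹ := by rw [ih]
      _ = Y * X ^ (3 * k) * X ^ 3 := by rw [hXinv]
      _ = Y * X ^ (3 * (k + 1)) := by rw [mul_assoc, ← pow_add, Nat.mul_succ]

lemma hYYpow : Y * Y = X ^ 2 := by rw [hYY, pow_two]

lemma hZYX : Z = Y * X := by
  rw [hZ]
  calc X * Y⁻¹ = (X * Y⁻¹ * X⁻¹) * X := by group
    _ = Y * X := by rw [← hYc]

def psifun : QuaternionGroup 2 → P
  | .a i => X ^ i.val
  | .xa i => Y * X ^ i.val

lemma key1 : ∀ i j : ZMod 4, (i + j).val = (i.val + j.val) % 4 := by decide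
lemma key2 : ∀ i j : ZMod 4, (j - i).val = (3 * i.val + j.val) % 4 := by decide
lemma key3 : ∀ i j : ZMod 4, ((2 : ZMod 4) + j - i).val = (2 + 3 * i.val + j.val) % 4 := by
  decide

lemma psimul : ∀ q r : QuaternionGroup 2, psifun (q * r) = psifun q * psifun r := by
  rintro (i | i) (j | j)
  · show X ^ (i + j).val = X ^ i.val * X ^ j.val
    rw [← pow_add, key1, ← hpow]
  · show Y * X ^ (j - i).val = X ^ i.val * (Y * X ^ j.val)
    rw [← mul_assoc, hcomm, key2, ← hpow, mul_assoc, ← pow_add]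
  · show Y * X ^ (i + j).val = Y * X ^ i.val * X ^ j.val
    rw [mul_assoc, ← pow_add, key1, ← hpow]
  · show X ^ ((2 : ZMod 4) + j - i).val = Y * X ^ i.val * (Y * X ^ j.val)
    rw [show Y * X ^ i.val * (Y * X ^ j.val) = Y * (X ^ i.val * Y) * X ^ j.val by group,
      hcomm, ← mul_assoc, hYYpow, ← pow_add, ← pow_add, key3, ← hpow]

def ψ : QuaternionGroup 2 →* P := MonoidHom.mk' psifun psimul

def fgen : Fin 4 → QuaternionGroup 2 := ![.a 1, .xa 0, .xa 1, 1]

lemma frels : ∀ r ∈ hmRels, FreeGroup.lift fgen r = 1 := by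
  intro r hr
  simp only [hmRels, Set.mem_insert_iff, Set.mem_singleton_iff] at hr
  rcases hr with rfl | rfl | rfl | rfl <;> simp [fgen] <;> decide

def φ : P →* QuaternionGroup 2 := PresentedGroup.toGroup frels

lemma phiX : φ X = .a 1 := PresentedGroup.toGroup.of frels
lemma phiY : φ Y = .xa 0 := PresentedGroup.toGroup.of frels
lemma phiZ : φ Z = .xa 1 := PresentedGroup.toGroup.of frels
lemma phiW : φ W = 1 := PresentedGroup.toGroup.of frels

lemma right_inv : ∀ q : QuaternionGroup 2, φ (ψ q) = q := by
  rintro (i | i) <;> fin_cases i <;> simp [ψ, psifun, map_pow, phiX, phiY] <;> decide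

lemma left_inv : ∀ p : P, ψ (φ p) = p := by
  have hcomp : ψ.comp φ = MonoidHom.id P := by
    apply PresentedGroup.ext
    intro x
    fin_cases x
    · show ψ (φ X) = X
      rw [phiX]
      show X ^ (1 : ZMod 4).val = X
      rw [show (1 : ZMod 4).val = 1 from rfl, pow_one]
    · show ψ (φ Y) = Y
      rw [phiY]
      show Y * X ^ (0 : ZMod 4).val = Y
      rw [show (0 : ZMod 4).val = 0 from rfl, pow_zero, mul_one]
    · show ψ (φ Z) = Z
      rw [phiZ]
      show Y * X ^ (1 : ZMod 4).val = Z
      rw [show (1 : ZMod 4).val = 1 from rfl, pow_one, hZYX]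
    · show ψ (φ W) = W
      rw [phiW, map_one, h4]
  intro p
  have := congrFun (congrArg DFunLike.coe hcomp) p
  simpa using this

end HMAux

/-- The quotient of the free group on `x, y, z, w` by the normal closure of the relators
`(y z⁻¹)(x w⁻¹)⁻¹`, `(y w⁻¹)(z x⁻¹)⁻¹`, `(z w⁻¹)(x y⁻¹)⁻¹` and `w` is isomorphic to the
quaternion group `Q₈`. -/
theorem hypercubical_fundamental_group_presentation :
    Nonempty (PresentedGroup hmRels ≃* QuaternionGroup 2) := by
  exact ⟨{ toFun := HMAux.φ, invFun := HMAux.ψ, left_inv := HMAux.left_inv,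
           right_inv := HMAux.right_inv, map_mul' := map_mul HMAux.φ }⟩
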